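/- Let m, b ∈ ℕ, s = m + b, let (X_t) be a stationary φ-mixing process taking values in ℝ with mixing coefficients φ_X, and let ψ : ℝ^m → ℝ be a measurable function. Then the stochastic process Z_t = ψ(X_{st+1},…,X_{st+m}) is a φ-mixing process whose mixing coefficients satisfy φ_Z(t) ≤ φ_X(b t + m(t−1)) for every t ≥ 1. -/

import Mathlib

open MeasureTheory Filter Finset

/-- A sequence of random variables is stationary if every finite window of consecutive
variables has the same distribution as any of its time-shifts. -/
def IsStationarySeq {Ω U : Type*} [MeasurableSpace Ω] [MeasurableSpace U]
    (P : Measure Ω) (X : ℕ → Ω → U) : Prop :=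
  ∀ t m s : ℕ,
    P.map (fun ω => fun i : Fin (m + 1) => X (t + i.val) ω) =
      P.map (fun ω => fun i : Fin (m + 1) => X (t + s + i.val) ω)

/-- The sigma-algebra generated by the random variables `X r`, `r ≥ n`. -/
def sigmaAfter {Ω U : Type*} [MeasurableSpace U] (X : ℕ → Ω → U) (n : ℕ) :
    MeasurableSpace Ω :=
  ⨆ r ∈ Set.Ici n, MeasurableSpace.comap (X r) inferInstance

/-- The sigma-algebra generated by the random variables `X r`, `r ≤ n`. -/
def sigmaUpTo {Ω U : Type*} [MeasurableSpace U] (X : ℕ → Ω → U) (n : ℕ) :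
    MeasurableSpace Ω :=
  ⨆ r ∈ Set.Iic n, MeasurableSpace.comap (X r) inferInstance

/-- The φ-mixing coefficient of the process `X` :
`φ(n) = sup |P(A|B) - P(A)|`, the supremum running over all `t`, all events `A` in the
σ-algebra generated by `(X r : r ≥ t + n)` and all events `B` of positive probability in the
σ-algebra generated by `(X r : r ≤ t)`. -/
noncomputable def phiMixCoeff {Ω U : Type*} [MeasurableSpace Ω] [MeasurableSpace U]
    (P : Measure Ω) (X : ℕ → Ω → U) (n : ℕ) : ℝ :=
  sSup {x : ℝ | ∃ t : ℕ, ∃ A B : Set Ω,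
    MeasurableSet[sigmaAfter X (t + n)] A ∧ MeasurableSet[sigmaUpTo X t] B ∧
    0 < P B ∧ x = |(P (A ∩ B)).toReal / (P B).toReal - (P A).toReal|}

/-- `X` is a φ-mixing process: its mixing coefficients tend to `0`. -/
def IsPhiMixing {Ω U : Type*} [MeasurableSpace Ω] [MeasurableSpace U]
    (P : Measure Ω) (X : ℕ → Ω → U) : Prop :=
  Tendsto (phiMixCoeff P X) atTop (nhds 0)

/-- The Hamming distance: the number of coordinates at which `x` and `y` differ. -/
noncomputable def hammingDist' {U : Type*} {m : ℕ} (x y : Fin m → U) : ℕ :=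
  Nat.card {i : Fin m // x i ≠ y i}

/-- `ψ` is `l`-Lipschitz with respect to the Hamming metric: `|ψ x - ψ y|` is at most `l`
times the number of coordinates at which `x` and `y` differ. -/
def HammingLipschitzWith {U : Type*} {m : ℕ} (l : ℝ) (ψ : (Fin m → U) → ℝ) : Prop :=
  ∀ x y : Fin m → U, |ψ x - ψ y| ≤ l * (hammingDist' x y : ℝ)

section Aux

variable {Ω U : Type*} [MeasurableSpace Ω] [MeasurableSpace U]

/-- The set whose supremum defines the φ-mixing coefficient. -/
def phiSet (P : Measure Ω) (Y : ℕ → Ω → U) (n : ℕ) : Set ℝ :=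
  {x : ℝ | ∃ t : ℕ, ∃ A B : Set Ω,
    MeasurableSet[sigmaAfter Y (t + n)] A ∧ MeasurableSet[sigmaUpTo Y t] B ∧
    0 < P B ∧ x = |(P (A ∩ B)).toReal / (P B).toReal - (P A).toReal|}

lemma phiMixCoeff_eq (P : Measure Ω) (Y : ℕ → Ω → U) (n : ℕ) :
    phiMixCoeff P Y n = sSup (phiSet P Y n) := rfl

lemma phiSet_bddAbove (P : Measure Ω) [IsProbabilityMeasure P] (Y : ℕ → Ω → U) (n : ℕ) :
    BddAbove (phiSet P Y n) := by
  refine ⟨1, ?_⟩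
  rintro x ⟨t, A, B, -, -, hB, rfl⟩
  have hBfin : P B ≠ ⊤ := measure_ne_top P B
  have h1 : (P (A ∩ B)).toReal / (P B).toReal ≤ 1 := by
    apply div_le_one_of_le₀
    · exact ENNReal.toReal_mono hBfin (measure_mono Set.inter_subset_right)
    · exact ENNReal.toReal_nonneg
  have h2 : (0:ℝ) ≤ (P (A ∩ B)).toReal / (P B).toReal := by positivity
  have h3 : (P A).toReal ≤ 1 := by
    have := ENNReal.toReal_mono (measure_ne_top P Set.univ) (measure_mono (Set.subset_univ A))
    simpa [measure_univ] using this
  have h4 : (0:ℝ) ≤ (P A).toReal := ENNReal.toReal_nonneg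
  rw [abs_sub_le_iff]
  constructor <;> linarith

lemma phiSet_zero_mem (P : Measure Ω) [IsProbabilityMeasure P] (Y : ℕ → Ω → U) (n : ℕ) :
    (0:ℝ) ∈ phiSet P Y n := by
  refine ⟨0, ∅, Set.univ, @MeasurableSet.empty _ (sigmaAfter Y (0 + n)),
    @MeasurableSet.univ _ (sigmaUpTo Y 0), ?_, ?_⟩
  · simp
  · simp

lemma phiMixCoeff_nonneg (P : Measure Ω) [IsProbabilityMeasure P] (Y : ℕ → Ω → U) (n : ℕ) :
    0 ≤ phiMixCoeff P Y n :=
  le_csSup (phiSet_bddAbove P Y n) (phiSet_zero_mem P Y n)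

lemma sigmaAfter_anti (Y : ℕ → Ω → U) {a c : ℕ} (h : c ≤ a) :
    sigmaAfter Y a ≤ sigmaAfter Y c := by
  refine iSup₂_le fun r hr => ?_
  exact le_iSup₂_of_le r (h.trans (Set.mem_Ici.mp hr)) le_rfl

lemma sigmaUpTo_mono (Y : ℕ → Ω → U) {a c : ℕ} (h : a ≤ c) :
    sigmaUpTo Y a ≤ sigmaUpTo Y c := by
  refine iSup₂_le fun r hr => ?_
  exact le_iSup₂_of_le r ((Set.mem_Iic.mp hr).trans h) le_rfl

end Aux

/-- **Mixing coefficients of a block factor process** (Proposition 6).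
If `(X_t)` is a stationary real-valued φ-mixing process with mixing coefficients `φ_X`,
`s = m + b` and `ψ : ℝ^m → ℝ` is measurable, then `Z_t = ψ(X_{st+1},…,X_{st+m})` is a
φ-mixing process whose mixing coefficients satisfy `φ_Z(t) ≤ φ_X(bt + m(t−1))` for `t ≥ 1`. -/
theorem block_factor_phi_mixing
    {Ω : Type*} [MeasurableSpace Ω] (P : Measure Ω) [IsProbabilityMeasure P]
    (m b : ℕ) (s : ℕ) (hs : s = m + b)
    (X : ℕ → Ω → ℝ) (hXmeas : ∀ t, Measurable (X t))
    (hstat : IsStationarySeq P X)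
    (φX : ℕ → ℝ) (hφX : ∀ n, φX n = phiMixCoeff P X n)
    (hmixing : Tendsto φX atTop (nhds 0))
    (ψ : (Fin m → ℝ) → ℝ) (hψmeas : Measurable ψ)
    (Z : ℕ → Ω → ℝ) (hZ : ∀ t ω, Z t ω = ψ (fun i => X (s * t + 1 + i.val) ω)) :
    IsPhiMixing P Z ∧ ∀ t : ℕ, 1 ≤ t → phiMixCoeff P Z t ≤ φX (b * t + m * (t - 1)) := by
  -- each `Z r` is measurable with respect to the σ-algebra generated by the block of `X`'s
  have hcomapZ : ∀ r, MeasurableSpace.comap (Z r) inferInstance ≤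
      ⨆ i : Fin m, MeasurableSpace.comap (X (s * r + 1 + i.val)) inferInstance := by
    intro r
    have hZfun : Z r = ψ ∘ (fun ω => fun i : Fin m => X (s * r + 1 + i.val) ω) :=
      funext fun ω => hZ r ω
    rw [hZfun, ← MeasurableSpace.comap_comp]
    calc MeasurableSpace.comap (fun ω => fun i : Fin m => X (s * r + 1 + i.val) ω)
          (MeasurableSpace.comap ψ inferInstance)
        ≤ MeasurableSpace.comap (fun ω => fun i : Fin m => X (s * r + 1 + i.val) ω)
          MeasurableSpace.pi := MeasurableSpace.comap_mono hψmeas.comap_le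
      _ = ⨆ i : Fin m, MeasurableSpace.comap (X (s * r + 1 + i.val)) inferInstance := by
          simp_rw [MeasurableSpace.pi, MeasurableSpace.comap_iSup, MeasurableSpace.comap_comp,
            Function.comp_def]
  have hAfter : ∀ k, sigmaAfter Z k ≤ sigmaAfter X (s * k + 1) := by
    intro k
    refine iSup₂_le fun r hr => (hcomapZ r).trans (iSup_le fun i => ?_)
    refine le_iSup₂_of_le (s * r + 1 + i.val) ?_ le_rfl
    have h1 : s * k ≤ s * r := Nat.mul_le_mul le_rfl (Set.mem_Ici.mp hr)
    simp only [Set.mem_Ici]; omega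
  have hUpTo : ∀ k, sigmaUpTo Z k ≤ sigmaUpTo X (s * k + m) := by
    intro k
    refine iSup₂_le fun r hr => (hcomapZ r).trans (iSup_le fun i => ?_)
    refine le_iSup₂_of_le (s * r + 1 + i.val) ?_ le_rfl
    have h1 : s * r ≤ s * k := Nat.mul_le_mul le_rfl (Set.mem_Iic.mp hr)
    have h2 : i.val < m := i.isLt
    simp only [Set.mem_Iic]; omega
  have hbound : ∀ n : ℕ, 1 ≤ n → phiMixCoeff P Z n ≤ φX (b * n + m * (n - 1)) := by
    intro n hn
    rw [hφX, phiMixCoeff_eq, phiMixCoeff_eq]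
    refine csSup_le_csSup (phiSet_bddAbove P X _) ⟨0, phiSet_zero_mem P Z n⟩ ?_
    rintro x ⟨t, A, B, hA, hB, hPB, rfl⟩
    refine ⟨s * t + m, A, B, ?_, hUpTo t B hB, hPB, rfl⟩
    have key : s * t + m + (b * n + m * (n - 1)) ≤ s * (t + n) + 1 := by
      obtain ⟨k, rfl⟩ : ∃ k, n = k + 1 := ⟨n - 1, by omega⟩
      subst hs
      have e1 : (k + 1) - 1 = k := rfl
      rw [e1]
      nlinarith [Nat.zero_le k, Nat.zero_le t]
    exact sigmaAfter_anti X key A (hAfter (t + n) A hA)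
  refine ⟨?_, hbound⟩
  rw [IsPhiMixing]
  rcases Nat.eq_zero_or_pos s with hs0 | hspos
  · -- degenerate case: `Z` is a constant process, all mixing coefficients are zero
    have hm0 : m = 0 := by omega
    subst hm0
    have hZconst : ∀ r, Z r = fun _ => ψ (fun i => i.elim0) := by
      intro r; funext ω; rw [hZ]; congr 1; exact Subsingleton.elim _ _
    have hbot : ∀ k, sigmaAfter Z k = ⊥ ∧ sigmaUpTo Z k = ⊥ := by
      intro k
      constructor
      · refine le_bot_iff.mp (iSup₂_le fun r _ => ?_)
        rw [hZconst r, MeasurableSpace.comap_const]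
      · refine le_bot_iff.mp (iSup₂_le fun r _ => ?_)
        rw [hZconst r, MeasurableSpace.comap_const]
    have hzero : ∀ n, phiMixCoeff P Z n = 0 := by
      intro n
      refine le_antisymm ?_ (phiMixCoeff_nonneg P Z n)
      rw [phiMixCoeff_eq]
      refine csSup_le ⟨0, phiSet_zero_mem P Z n⟩ ?_
      rintro x ⟨t, A, B, hA, hB, hPB, rfl⟩
      rw [(hbot (t + n)).1] at hA
      rcases MeasurableSpace.measurableSet_bot_iff.mp hA with rfl | rfl
      · simp
      · have hPBfin : P B ≠ ⊤ := measure_ne_top P B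
        have hPBne : (P B).toReal ≠ 0 :=
          (ENNReal.toReal_pos hPB.ne' hPBfin).ne'
        rw [Set.univ_inter, div_self hPBne, measure_univ]
        simp
    have he : phiMixCoeff P Z = fun _ => (0:ℝ) := funext hzero
    rw [he]; exact tendsto_const_nhds
  · -- main case: squeeze between 0 and `φX (b n + m (n-1)) → 0`
    have htop : Tendsto (fun n : ℕ => b * n + m * (n - 1)) atTop atTop := by
      apply tendsto_atTop_mono _ (tendsto_sub_atTop_nat 1)
      intro n
      rcases Nat.eq_zero_or_pos b with hb | hb
      · have hm : 1 ≤ m := by omega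
        calc n - 1 = 1 * (n - 1) := (one_mul _).symm
          _ ≤ m * (n - 1) := Nat.mul_le_mul_right _ hm
          _ ≤ b * n + m * (n - 1) := Nat.le_add_left _ _
      · calc n - 1 ≤ n := Nat.sub_le _ _
          _ ≤ b * n := Nat.le_mul_of_pos_left _ hb
          _ ≤ b * n + m * (n - 1) := Nat.le_add_right _ _
    refine tendsto_of_tendsto_of_tendsto_of_le_of_le' tendsto_const_nhds
      (hmixing.comp htop) ?_ ?_
    · exact Eventually.of_forall fun n => phiMixCoeff_nonneg P Z n
    · filter_upwards [eventually_ge_atTop 1] with n hn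
      exact hbound n hn
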